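/- Consider the system A₁X₁B₁ + C₁X₂D₁ = E₁, A₂X₂B₂ + C₂X₃D₂ = E₂ over ℂ. If it is solvable, then rank of the block matrix with rows [B₁; (E₁, C₁); (D₁, 0, B₂); (0, A₂, -E₂); (0, 0, D₂)] (columns corresponding to the appropriate sizes) equals rank[C₁; A₂] + rank of the matrix [[B₁, 0],[D₁, B₂],[0, D₂]]. -/

import Mathlib

open Matrix

/-- prod of two submodules is linearly equivalent to the product module. -/
def TwoStep.prodSubEquiv {R M N : Type*} [Semiring R] [AddCommMonoid M] [AddCommMonoid N]
    [Module R M] [Module R N] (p : Submodule R M) (q : Submodule R N) :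
    (p.prod q) ≃ₗ[R] p × q where
  toFun x := (⟨x.1.1, x.2.1⟩, ⟨x.1.2, x.2.2⟩)
  invFun x := ⟨(x.1.1, x.2.1), ⟨x.1.2, x.2.2⟩⟩
  map_add' _ _ := rfl
  map_smul' _ _ := rfl
  left_inv _ := rfl
  right_inv _ := rfl

lemma TwoStep.finrank_prod_submodule {M N : Type*} [AddCommGroup M] [AddCommGroup N]
    [Module ℂ M] [Module ℂ N] [FiniteDimensional ℂ M] [FiniteDimensional ℂ N]
    (p : Submodule ℂ M) (q : Submodule ℂ N) :
    Module.finrank ℂ (p.prod q) = Module.finrank ℂ p + Module.finrank ℂ q := by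
  rw [(TwoStep.prodSubEquiv p q).finrank_eq, Module.finrank_prod]

lemma TwoStep.rank_fromBlocks_diag {m m' n n' : Type*} [Fintype m] [Fintype m'] [Fintype n]
    [Fintype n'] [DecidableEq n] [DecidableEq n']
    (A : Matrix m n ℂ) (D : Matrix m' n' ℂ) :
    (fromBlocks A (0 : Matrix m n' ℂ) (0 : Matrix m' n ℂ) D).rank = A.rank + D.rank := by
  classical
  let eM := LinearEquiv.sumArrowLequivProdArrow m m' ℂ ℂ
  let eN := LinearEquiv.sumArrowLequivProdArrow n n' ℂ ℂ
  have hf : (fromBlocks A (0 : Matrix m n' ℂ) (0 : Matrix m' n ℂ) D).mulVecLin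
      = (eM.symm.toLinearMap) ∘ₗ (A.mulVecLin.prodMap D.mulVecLin) ∘ₗ eN.toLinearMap := by
    apply LinearMap.ext; intro x; funext i
    cases i <;>
      simp [eM, eN, fromBlocks_mulVec, LinearEquiv.sumArrowLequivProdArrow,
        Equiv.sumArrowEquivProdArrow]
  have hrange : LinearMap.range (A.mulVecLin.prodMap D.mulVecLin)
      = (LinearMap.range A.mulVecLin).prod (LinearMap.range D.mulVecLin) := by
    ext ⟨a, b⟩
    simp only [LinearMap.mem_range, LinearMap.prodMap_apply, Submodule.mem_prod, Prod.ext_iff,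
      Prod.mk.injEq]
    constructor
    · rintro ⟨y, hy1, hy2⟩; exact ⟨⟨y.1, hy1⟩, ⟨y.2, hy2⟩⟩
    · rintro ⟨⟨y1, h1⟩, ⟨y2, h2⟩⟩; exact ⟨(y1, y2), h1, h2⟩
  rw [Matrix.rank, Matrix.rank, Matrix.rank, hf, LinearMap.range_comp,
    LinearMap.range_comp_of_range_eq_top _ (LinearEquiv.range eN),
    LinearEquiv.finrank_map_eq, hrange, TwoStep.finrank_prod_submodule]

lemma TwoStep.rank_reindex' {m m' n n' : Type*} [Fintype m] [Fintype m'] [Fintype n] [Fintype n']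
    [DecidableEq n] [DecidableEq n'] (e₁ : m ≃ m') (e₂ : n ≃ n') (A : Matrix m n ℂ) :
    (reindex e₁ e₂ A).rank = A.rank := by
  rw [Matrix.rank, Matrix.rank, mulVecLin_reindex, LinearMap.range_comp, LinearMap.range_comp,
    LinearEquiv.range, Submodule.map_top, LinearEquiv.finrank_map_eq]

def TwoStep.rowShuffle {a b c d e : Type*} :
    ((a ⊕ (c ⊕ e)) ⊕ (b ⊕ d)) ≃ (a ⊕ (b ⊕ (c ⊕ (d ⊕ e)))) where
  toFun x := match x with
    | .inl (.inl x) => .inl x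
    | .inl (.inr (.inl x)) => .inr (.inr (.inl x))
    | .inl (.inr (.inr x)) => .inr (.inr (.inr (.inr x)))
    | .inr (.inl x) => .inr (.inl x)
    | .inr (.inr x) => .inr (.inr (.inr (.inl x)))
  invFun y := match y with
    | .inl x => .inl (.inl x)
    | .inr (.inl x) => .inr (.inl x)
    | .inr (.inr (.inl x)) => .inl (.inr (.inl x))
    | .inr (.inr (.inr (.inl x))) => .inr (.inr x)
    | .inr (.inr (.inr (.inr x))) => .inl (.inr (.inr x))
  left_inv := by rintro ((x | (x | x)) | (x | x)) <;> rfl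
  right_inv := by rintro (x | (x | (x | (x | x)))) <;> rfl

def TwoStep.colShuffle {a b c : Type*} : ((a ⊕ c) ⊕ b) ≃ (a ⊕ (b ⊕ c)) where
  toFun x := match x with
    | .inl (.inl x) => .inl x
    | .inl (.inr x) => .inr (.inr x)
    | .inr x => .inr (.inl x)
  invFun y := match y with
    | .inl x => .inl (.inl x)
    | .inr (.inl x) => .inr x
    | .inr (.inr x) => .inl (.inr x)
  left_inv := by rintro ((x | x) | x) <;> rfl
  right_inv := by rintro (x | (x | x)) <;> rfl

lemma TwoStep.fromRows_add' {R m₁ m₂ n : Type*} [AddCommMonoid R] (A₁ B₁ : Matrix m₁ n R)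
    (A₂ B₂ : Matrix m₂ n R) :
    fromRows A₁ A₂ + fromRows B₁ B₂ = fromRows (A₁ + B₁) (A₂ + B₂) := by
  ext (i | i) j <;> simp

lemma TwoStep.fromColumns_add' {R m n₁ n₂ : Type*} [AddCommMonoid R] (A₁ B₁ : Matrix m n₁ R)
    (A₂ B₂ : Matrix m n₂ R) :
    fromCols A₁ A₂ + fromCols B₁ B₂ = fromCols (A₁ + B₁) (A₂ + B₂) := by
  ext i (j | j) <;> simp

theorem two_step_chain_rank_eq_35
    {m₁ p₁ q₁ n₁ m₂ p₂ q₂ n₂ p₃ q₃ : ℕ}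
    (A₁ : Matrix (Fin m₁) (Fin p₁) ℂ) (B₁ : Matrix (Fin q₁) (Fin n₁) ℂ)
    (C₁ : Matrix (Fin m₁) (Fin p₂) ℂ) (D₁ : Matrix (Fin q₂) (Fin n₁) ℂ)
    (E₁ : Matrix (Fin m₁) (Fin n₁) ℂ)
    (A₂ : Matrix (Fin m₂) (Fin p₂) ℂ) (B₂ : Matrix (Fin q₂) (Fin n₂) ℂ)
    (C₂ : Matrix (Fin m₂) (Fin p₃) ℂ) (D₂ : Matrix (Fin q₃) (Fin n₂) ℂ)
    (E₂ : Matrix (Fin m₂) (Fin n₂) ℂ)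
    (X₁ : Matrix (Fin p₁) (Fin q₁) ℂ) (X₂ : Matrix (Fin p₂) (Fin q₂) ℂ)
    (X₃ : Matrix (Fin p₃) (Fin q₃) ℂ)
    (h₁ : A₁ * X₁ * B₁ + C₁ * X₂ * D₁ = E₁)
    (h₂ : A₂ * X₂ * B₂ + C₂ * X₃ * D₂ = E₂) :
    (Matrix.fromRows
      (Matrix.fromCols B₁ (Matrix.fromCols (0 : Matrix (Fin q₁) (Fin p₂) ℂ)
        (0 : Matrix (Fin q₁) (Fin n₂) ℂ)))
      (Matrix.fromRows
        (Matrix.fromCols E₁ (Matrix.fromCols C₁ (0 : Matrix (Fin m₁) (Fin n₂) ℂ)))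
        (Matrix.fromRows
          (Matrix.fromCols D₁ (Matrix.fromCols (0 : Matrix (Fin q₂) (Fin p₂) ℂ) B₂))
          (Matrix.fromRows
            (Matrix.fromCols (0 : Matrix (Fin m₂) (Fin n₁) ℂ)
              (Matrix.fromCols A₂ (-E₂)))
            (Matrix.fromCols (0 : Matrix (Fin q₃) (Fin n₁) ℂ)
              (Matrix.fromCols (0 : Matrix (Fin q₃) (Fin p₂) ℂ) D₂)))))).rank =
    (Matrix.fromRows C₁ A₂).rank +
    (Matrix.fromRows
      (Matrix.fromCols B₁ (0 : Matrix (Fin q₁) (Fin n₂) ℂ))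
      (Matrix.fromRows
        (Matrix.fromCols D₁ B₂)
        (Matrix.fromCols (0 : Matrix (Fin q₃) (Fin n₁) ℂ) D₂))).rank := by
  classical
  subst h₁ h₂
  set M : Matrix (Fin q₁ ⊕ (Fin m₁ ⊕ (Fin q₂ ⊕ (Fin m₂ ⊕ Fin q₃))))
      (Fin n₁ ⊕ (Fin p₂ ⊕ Fin n₂)) ℂ :=
    (Matrix.fromRows
      (Matrix.fromCols B₁ (Matrix.fromCols (0 : Matrix (Fin q₁) (Fin p₂) ℂ)
        (0 : Matrix (Fin q₁) (Fin n₂) ℂ)))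
      (Matrix.fromRows
        (Matrix.fromCols (A₁ * X₁ * B₁ + C₁ * X₂ * D₁)
          (Matrix.fromCols C₁ (0 : Matrix (Fin m₁) (Fin n₂) ℂ)))
        (Matrix.fromRows
          (Matrix.fromCols D₁ (Matrix.fromCols (0 : Matrix (Fin q₂) (Fin p₂) ℂ) B₂))
          (Matrix.fromRows
            (Matrix.fromCols (0 : Matrix (Fin m₂) (Fin n₁) ℂ)
              (Matrix.fromCols A₂ (-(A₂ * X₂ * B₂ + C₂ * X₃ * D₂))))
            (Matrix.fromCols (0 : Matrix (Fin q₃) (Fin n₁) ℂ)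
              (Matrix.fromCols (0 : Matrix (Fin q₃) (Fin p₂) ℂ) D₂)))))) with hMdef
  set Nmat : Matrix (Fin q₁ ⊕ (Fin q₂ ⊕ Fin q₃)) (Fin n₁ ⊕ Fin n₂) ℂ :=
    (Matrix.fromRows
      (Matrix.fromCols B₁ (0 : Matrix (Fin q₁) (Fin n₂) ℂ))
      (Matrix.fromRows
        (Matrix.fromCols D₁ B₂)
        (Matrix.fromCols (0 : Matrix (Fin q₃) (Fin n₁) ℂ) D₂))) with hNdef
  let L : Matrix (Fin q₁ ⊕ (Fin m₁ ⊕ (Fin q₂ ⊕ (Fin m₂ ⊕ Fin q₃))))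
      (Fin q₁ ⊕ (Fin m₁ ⊕ (Fin q₂ ⊕ (Fin m₂ ⊕ Fin q₃)))) ℂ :=
    fromBlocks 1 0 (fromRows (-(A₁ * X₁)) 0)
      (fromBlocks 1 (fromCols (-(C₁ * X₂)) 0) 0
        (fromBlocks 1 0 0 (fromBlocks 1 (C₂ * X₃) 0 1)))
  let L' : Matrix (Fin q₁ ⊕ (Fin m₁ ⊕ (Fin q₂ ⊕ (Fin m₂ ⊕ Fin q₃))))
      (Fin q₁ ⊕ (Fin m₁ ⊕ (Fin q₂ ⊕ (Fin m₂ ⊕ Fin q₃)))) ℂ :=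
    fromBlocks 1 0 (fromRows (A₁ * X₁) 0)
      (fromBlocks 1 (fromCols (C₁ * X₂) 0) 0
        (fromBlocks 1 0 0 (fromBlocks 1 (-(C₂ * X₃)) 0 1)))
  let Rm : Matrix (Fin n₁ ⊕ (Fin p₂ ⊕ Fin n₂)) (Fin n₁ ⊕ (Fin p₂ ⊕ Fin n₂)) ℂ :=
    fromBlocks 1 0 0 (fromBlocks 1 (X₂ * B₂) 0 1)
  let Rm' : Matrix (Fin n₁ ⊕ (Fin p₂ ⊕ Fin n₂)) (Fin n₁ ⊕ (Fin p₂ ⊕ Fin n₂)) ℂ :=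
    fromBlocks 1 0 0 (fromBlocks 1 (-(X₂ * B₂)) 0 1)
  let M₁ : Matrix (Fin q₁ ⊕ (Fin m₁ ⊕ (Fin q₂ ⊕ (Fin m₂ ⊕ Fin q₃))))
      (Fin n₁ ⊕ (Fin p₂ ⊕ Fin n₂)) ℂ :=
    fromRows (fromCols B₁ (fromCols 0 0))
      (fromRows (fromCols 0 (fromCols C₁ 0))
        (fromRows (fromCols D₁ (fromCols 0 B₂))
          (fromRows (fromCols 0 (fromCols A₂ 0))
            (fromCols 0 (fromCols 0 D₂)))))
  have hLL : L' * L = 1 := by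
    simp [L, L', fromBlocks_multiply, fromBlocks_mul_fromRows, fromCols_mul_fromBlocks,
      TwoStep.fromRows_add', TwoStep.fromColumns_add',
      fromBlocks_one, Matrix.neg_mul, Matrix.mul_neg]
  have hRR : Rm * Rm' = 1 := by
    simp [Rm, Rm', fromBlocks_multiply, fromBlocks_one]
  have key : L * (M * Rm) = M₁ := by
    simp [M, L, Rm, M₁, fromBlocks_multiply, fromBlocks_mul_fromRows, fromRows_mul,
      fromCols_mul_fromBlocks, fromCols_mul_fromRows, mul_fromCols,
      TwoStep.fromRows_add', TwoStep.fromColumns_add', Matrix.add_mul, Matrix.mul_add,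
      Matrix.neg_mul, Matrix.mul_neg, Matrix.mul_assoc,
      fromCols_fromRows_eq_fromBlocks, fromRows_fromCols_eq_fromBlocks, fromBlocks_add,
      fromRows_ext_iff, fromCols_ext_iff]
    ext (i | i | i | i | i) (j | j | j) <;>
      simp
  have hrank1 : M.rank = M₁.rank := by
    rw [← key,
      Matrix.rank_mul_eq_right_of_isUnit_det L _ (Matrix.isUnit_det_of_left_inverse hLL),
      Matrix.rank_mul_eq_left_of_isUnit_det Rm M (Matrix.isUnit_det_of_right_inverse hRR)]
  have hsub : M₁.submatrix TwoStep.rowShuffle TwoStep.colShuffle =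
      fromBlocks Nmat (0 : Matrix (Fin q₁ ⊕ (Fin q₂ ⊕ Fin q₃)) (Fin p₂) ℂ)
        (0 : Matrix (Fin m₁ ⊕ Fin m₂) (Fin n₁ ⊕ Fin n₂) ℂ) (fromRows C₁ A₂) := by
    ext i j
    rcases i with ((i | i | i) | (i | i)) <;> rcases j with ((j | j) | j) <;> rfl
  have hrank2 : M₁.rank = Nmat.rank + (fromRows C₁ A₂).rank := by
    have h := TwoStep.rank_reindex' TwoStep.rowShuffle.symm TwoStep.colShuffle.symm M₁
    rw [reindex_apply, Equiv.symm_symm, Equiv.symm_symm, hsub] at h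
    rw [← h, TwoStep.rank_fromBlocks_diag]
  rw [hrank1, hrank2, add_comm]
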